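/- The Cherednik operator T^k f(x) = f'(x) + 2k (f(x) - f(-x))/(1 - e^{-2x}) - k f(x) applied to the function H(x) = e^x g(-x), where g satisfies T^k g = λ g, yields T^k H = (1 - λ) H. -/

import Mathlib

open Complex Real

/-- If `T^k g = λ g` where
`T^k f (x) = f'(x) + 2k (f(x)-f(-x))/(1-e^{-2x}) - k f(x)`, then
`H(x) = e^x g(-x)` satisfies `T^k H = (1-λ) H`. -/
theorem cherednik_reflection_eigen (k : ℝ) (hk : 0 ≤ k) (g : ℝ → ℂ) (lam : ℂ)
    (hg : Differentiable ℝ g)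
    (heig : ∀ x : ℝ, x ≠ 0 →
      deriv g x + 2 * k * (g x - g (-x)) / (1 - Complex.exp (-2 * x)) - k * g x
        = lam * g x) :
    ∀ x : ℝ, x ≠ 0 →
      deriv (fun y : ℝ => Complex.exp y * g (-y)) x
          + 2 * k * ((Complex.exp x * g (-x)) - (Complex.exp (-x) * g x))
              / (1 - Complex.exp (-2 * x))
          - k * (Complex.exp x * g (-x))
        = (1 - lam) * (Complex.exp x * g (-x)) := by
  intro x hx
  have hA : Complex.exp (x:ℂ) ≠ 0 := Complex.exp_ne_zero _
  have key : ∀ t : ℝ, t ≠ 0 → (1 : ℂ) - Complex.exp (-2 * t) ≠ 0 := by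
    intro t ht h
    rw [sub_eq_zero] at h
    have h1 : Complex.exp (-2 * (t:ℂ)) = ((Real.exp (-2 * t) : ℝ) : ℂ) := by
      rw [Complex.ofReal_exp]; push_cast; ring_nf
    rw [h1] at h
    have : Real.exp (-2 * t) = 1 := by exact_mod_cast h.symm
    have := Real.exp_eq_one_iff (-2 * t) |>.mp this
    apply ht; linarith
  have hd1 : (1 : ℂ) - Complex.exp (-2 * x) ≠ 0 := key x hx
  have hd2 : (1 : ℂ) - Complex.exp (-2 * ((-x : ℝ) : ℂ)) ≠ 0 := by
    have := key (-x) (neg_ne_zero.mpr hx)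
    push_cast at this ⊢; exact this
  have hH : HasDerivAt (fun y : ℝ => Complex.exp y * g (-y))
      (Complex.exp x * g (-x) + Complex.exp x * ((-1 : ℝ) • deriv g (-x))) x := by
    have h1 : HasDerivAt (fun y : ℝ => Complex.exp y) (Complex.exp x) x := by
      simpa using (Complex.hasDerivAt_exp (x:ℂ)).comp_ofReal
    have h2 : HasDerivAt (fun y : ℝ => g (-y)) ((-1 : ℝ) • deriv g (-x)) x := by
      have := HasDerivAt.scomp x ((hg (-x)).hasDerivAt) (hasDerivAt_neg x)
      simpa [Function.comp_def] using this
    exact h1.mul h2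
  rw [hH.deriv]
  have heq := heig (-x) (neg_ne_zero.mpr hx)
  push_cast at heq ⊢
  simp only [neg_neg, neg_one_smul] at heq ⊢
  have em : (-2 : ℂ) * -(x:ℂ) = 2 * x := by ring
  rw [em] at heq
  have e2 : Complex.exp (2 * (x:ℂ)) = Complex.exp x * Complex.exp x := by
    rw [← Complex.exp_add]; ring_nf
  have e3 : Complex.exp (-2 * (x:ℂ)) = (Complex.exp x * Complex.exp x)⁻¹ := by
    rw [← e2, ← Complex.exp_neg]; ring_nf
  have e4 : Complex.exp (-(x:ℂ)) = (Complex.exp x)⁻¹ := Complex.exp_neg _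
  rw [e2] at heq
  push_cast [em] at hd2
  rw [e2] at hd2
  rw [e3, e4]
  set A := Complex.exp (x:ℂ) with hAdef
  have hAA : A * A - 1 ≠ 0 := fun h => hd2 (by linear_combination -h)
  have hder : deriv g (-x) = lam * g (-x) + k * g (-x)
      - 2 * k * (g (-x) - g x) / (1 - A * A) := by linear_combination heq
  rw [hder]
  have h1 : (1:ℂ) - (A * A)⁻¹ = (A * A - 1) / (A * A) := by
    field_simp
  rw [h1]
  have h2 : (1:ℂ) - A * A ≠ 0 := hd2
  field_simp
  have hu : (1 - A ^ 2) * (1 - A ^ 2)⁻¹ = 1 :=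
    mul_inv_cancel₀ (fun h => h2 (by linear_combination h))
  have hv : (-1 + A ^ 2) * (-1 + A ^ 2)⁻¹ = 1 :=
    mul_inv_cancel₀ (fun h => hAA (by linear_combination h))
  linear_combination (2 * (k:ℂ) * g (-x) * (1 - (1 - A ^ 2)⁻¹) + 2 * (k:ℂ) * g x * (1 - A ^ 2)⁻¹) * hv
    + (-2 * (k:ℂ) * g (-x) * (-1 + A ^ 2)⁻¹ + 2 * (k:ℂ) * g x * (-1 + A ^ 2)⁻¹) * hu
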